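/- Let (V, ω) be a finite-dimensional symplectic vector space over a field 𝔽, let L ⊆ V be a Lagrangian subspace, and let S ⊆ V be an isotropic subspace. Then the subspace (L ∩ S°) + S is a Lagrangian subspace of V. -/

import Mathlib

/-- The `ω`-complement `T° = {v | ∀ t ∈ T, ω v t = 0}` of a set `T`, as a submodule. -/
def omegaCompl {F V : Type*} [Field F] [AddCommGroup V] [Module F V]
    (ω : V →ₗ[F] V →ₗ[F] F) (T : Set V) : Submodule F V where
  carrier := {v | ∀ x ∈ T, ω v x = 0}
  add_mem' := by
    intro a b ha hb x hx
    simp [ha x hx, hb x hx]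
  zero_mem' := by
    intro x hx
    simp
  smul_mem' := by
    intro c a ha x hx
    simp [ha x hx]

section aux
variable {F V : Type*} [Field F] [AddCommGroup V] [Module F V]
    (ω : V →ₗ[F] V →ₗ[F] F)

lemma omegaCompl_eq_orthogonal (href : ω.IsRefl) (T : Submodule F V) :
    omegaCompl ω (T : Set V) = LinearMap.BilinForm.orthogonal ω T := by
  ext v
  constructor
  · intro hv n hn
    exact href v n (hv n hn)
  · intro hv n hn
    exact href n v (hv n hn)

lemma orth_sup (A B : Submodule F V) :
    LinearMap.BilinForm.orthogonal ω (A ⊔ B) =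
      LinearMap.BilinForm.orthogonal ω A ⊓ LinearMap.BilinForm.orthogonal ω B := by
  ext v
  simp only [Submodule.mem_inf, LinearMap.BilinForm.mem_orthogonal_iff]
  constructor
  · intro h
    exact ⟨fun n hn => h n (Submodule.mem_sup_left hn),
           fun n hn => h n (Submodule.mem_sup_right hn)⟩
  · rintro ⟨h1, h2⟩ n hn
    obtain ⟨a, ha, b, hb, rfl⟩ := Submodule.mem_sup.1 hn
    have ha' := h1 a ha
    have hb' := h2 b hb
    rw [map_add, LinearMap.add_apply, ha', hb', add_zero]

end aux

/-- In a finite-dimensional symplectic vector space `(V, ω)`, if `L` is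
a Lagrangian subspace and `S` is an isotropic subspace, then `(L ∩ S°) + S` is a
Lagrangian subspace. -/
theorem statement15 {F V : Type*} [Field F] [AddCommGroup V] [Module F V]
    [FiniteDimensional F V]
    (ω : V →ₗ[F] V →ₗ[F] F)
    (halt : ∀ v, ω v v = 0)
    (hnd : ∀ u, (∀ v, ω u v = 0) → u = 0)
    (L S : Submodule F V)
    (hL : (L : Set V) = (omegaCompl ω (L : Set V) : Set V))
    (hS : (S : Set V) ⊆ (omegaCompl ω (S : Set V) : Set V)) :
    (((L ⊓ omegaCompl ω (S : Set V)) ⊔ S : Submodule F V) : Set V) =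
      (omegaCompl ω (((L ⊓ omegaCompl ω (S : Set V)) ⊔ S : Submodule F V) : Set V) :
        Set V) := by
  have href : ω.IsRefl := LinearMap.IsAlt.isRefl halt
  have hndB : LinearMap.BilinForm.Nondegenerate ω :=
    href.nondegenerate_iff_separatingLeft.2 fun m hm => hnd m hm
  have hLsub : L = omegaCompl ω (L : Set V) := SetLike.coe_injective hL
  have hSsub : S ≤ omegaCompl ω (S : Set V) := hS
  rw [omegaCompl_eq_orthogonal ω href] at hLsub hSsub ⊢
  have key : (L ⊓ LinearMap.BilinForm.orthogonal ω S) ⊔ S =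
      LinearMap.BilinForm.orthogonal ω ((L ⊓ LinearMap.BilinForm.orthogonal ω S) ⊔ S) := by
    have h1 : L ⊓ LinearMap.BilinForm.orthogonal ω S =
        LinearMap.BilinForm.orthogonal ω (L ⊔ S) := by
      rw [orth_sup, ← hLsub]
    calc L ⊓ LinearMap.BilinForm.orthogonal ω S ⊔ S
        = (L ⊔ S) ⊓ LinearMap.BilinForm.orthogonal ω S := by
          rw [inf_comm L, sup_comm L S, inf_comm (S ⊔ L),
            inf_sup_assoc_of_le _ hSsub, sup_comm S L]
      _ = LinearMap.BilinForm.orthogonal ω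
            ((L ⊓ LinearMap.BilinForm.orthogonal ω S) ⊔ S) := by
          rw [orth_sup, h1,
            LinearMap.BilinForm.orthogonal_orthogonal hndB href]
  conv_lhs => rw [key]
  rw [omegaCompl_eq_orthogonal ω href]
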